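/- arXiv:2212.03565 — 3 statements merged into one kernel-verified Lean document; each statement's English description precedes it below -/
import Mathlib

section
/- Let U be a consistent recursively enumerable theory. Then U is essentially hereditarily undecidable if and only if, for every set W of sentences in the language of U such that U ∪ W is consistent, the theory axiomatized by W is undecidable. -/
open FirstOrder Language

namespace Formalization

/-- An `Encodable` instance for bounded formulas, derived from Mathlib's encoding. -/
def sigmaBFEncodable (L : Language) (α : Type*) [Encodable α]
    [∀ n, Encodable (L.Functions n)] [∀ n, Encodable (L.Relations n)] :
    Encodable (Σ n, L.BoundedFormula α n) :=
  haveI : Encodable (Σ i, L.Functions i) := Sigma.encodable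
  haveI : Encodable (Σ i, L.Relations i) := Sigma.encodable
  Encodable.ofLeftInjection
    (fun φ => φ.2.listEncode)
    (fun l => (BoundedFormula.listDecode l)[0]?)
    (fun φ => BoundedFormula.encoding.decode_encode φ)

instance sentenceEncodable (L : Language)
    [∀ n, Encodable (L.Functions n)] [∀ n, Encodable (L.Relations n)] :
    Encodable L.Sentence :=
  haveI := sigmaBFEncodable L Empty
  Encodable.ofLeftInjection
    (fun φ => (⟨0, φ⟩ : Σ n, L.BoundedFormula Empty n))
    (fun p => match p with
      | ⟨0, φ⟩ => some φ
      | ⟨_ + 1, _⟩ => none)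
    (fun _ => rfl)

section TheoryNotions

variable {L : Language} [∀ n, Encodable (L.Functions n)] [∀ n, Encodable (L.Relations n)]

/-- The set of Gödel codes of theorems of a theory. -/
def TheoremSet (T : L.Theory) : Set ℕ :=
  {n | ∃ φ : L.Sentence, Encodable.encode φ = n ∧ T ⊨ᵇ φ}

/-- The set of Gödel codes of sentences refuted by a theory. -/
def RefutableSet (T : L.Theory) : Set ℕ :=
  {n | ∃ φ : L.Sentence, Encodable.encode φ = n ∧ T ⊨ᵇ ∼φ}

/-- A theory is recursively enumerable if its set of theorem-codes is r.e. -/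
def IsRE (T : L.Theory) : Prop := REPred (· ∈ TheoremSet T)

/-- A theory is decidable if its set of theorem-codes is computable. -/
def IsDecidableTheory (T : L.Theory) : Prop := ComputablePred (· ∈ TheoremSet T)

/-- A theory is consistent if it does not prove `⊥`. -/
def Consistent (T : L.Theory) : Prop := ¬ T ⊨ᵇ (⊥ : L.Sentence)

/-- `Extends T T'` : `T'` is an extension of `T` in the same language,
i.e. every theorem of `T` is a theorem of `T'`. -/
def Extends (T T' : L.Theory) : Prop := ∀ φ : L.Sentence, T ⊨ᵇ φ → T' ⊨ᵇ φ

/-- A theory is complete if it decides every sentence. -/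
def IsCompleteTheory (T : L.Theory) : Prop := ∀ φ : L.Sentence, T ⊨ᵇ φ ∨ T ⊨ᵇ ∼φ

/-- Hereditarily undecidable: every consistent r.e. sub-theory (in the same language)
is undecidable. -/
def HeredUndecidable (T : L.Theory) : Prop :=
  ∀ W : L.Theory, IsRE W → Consistent W → Extends W T → ¬ IsDecidableTheory W

/-- Essentially undecidable: every consistent r.e. extension (in the same language)
is undecidable. -/
def EssUndecidable (T : L.Theory) : Prop :=
  ∀ W : L.Theory, IsRE W → Consistent W → Extends T W → ¬ IsDecidableTheory W

/-- Essentially hereditarily undecidable: every consistent r.e. extension (in the same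
language) is hereditarily undecidable. -/
def EssHeredUndecidable (T : L.Theory) : Prop :=
  ∀ W : L.Theory, IsRE W → Consistent W → Extends T W → HeredUndecidable W

end TheoryNotions

end Formalization

namespace Formalization

/- ======================= Auxiliary development ======================= -/

open List

section Aux

open FirstOrder.Language.BoundedFormula

/-- The symbol alphabet used by `BoundedFormula.listEncode`. -/
abbrev Sym (L : Language) : Type _ :=
  (Σ k, L.Term (Empty ⊕ Fin k)) ⊕ ((Σ n, L.Relations n) ⊕ ℕ)

/-- The symbol beginning the encoding of an implication. -/
def impTag (L : Language) : Sym L := Sum.inr (Sum.inr 0)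

theorem listDecode_cons {L : Language} {α : Type*} :
    ∀ (φ : Σ n, L.BoundedFormula α n)
      (l' : List ((Σ k, L.Term (α ⊕ (Fin k))) ⊕ ((Σ n, L.Relations n) ⊕ ℕ))),
      listDecode (listEncode φ.2 ++ l') = φ :: listDecode l' := by
  rintro ⟨n, φ⟩
  induction φ with
  | falsum => intro l; rw [listEncode, singleton_append, listDecode]
  | equal =>
    intro l
    rw [listEncode, cons_append, cons_append, listDecode, dif_pos]
    · simp only [eq_mp_eq_cast, cast_eq, eq_self_iff_true, heq_iff_eq, and_self_iff, nil_append]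
    · simp only [eq_self_iff_true, heq_iff_eq, and_self_iff]
  | @rel φ_n φ_l φ_R ts =>
    intro l
    rw [listEncode, cons_append, cons_append, singleton_append, cons_append, listDecode]
    have h : ∀ i : Fin φ_l, ((List.map Sum.getLeft? (List.map (fun i : Fin φ_l =>
      Sum.inl (⟨(⟨φ_n, rel φ_R ts⟩ : Σn, L.BoundedFormula α n).fst, ts i⟩ :
        Σn, L.Term (α ⊕ (Fin n)))) (finRange φ_l) ++ l))[↑i]?).join = some ⟨_, ts i⟩ := by
      intro i
      simp only [Option.join, map_append, List.map_map, Fin.getElem?_fin, id, Option.bind_eq_some_iff,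
        List.getElem?_eq_some_iff, length_append, length_map, length_finRange, exists_eq_right]
      refine ⟨lt_of_lt_of_le i.2 le_self_add, ?_⟩
      rw [getElem_append_left, getElem_map]
      · simp only [getElem_finRange, Fin.cast_mk, Fin.eta, Function.comp_apply, Sum.getLeft?_inl]
      · simp only [length_map, length_finRange, Fin.is_lt]
    rw [dif_pos]
    swap
    · exact fun i => Option.isSome_iff_exists.2 ⟨⟨_, ts i⟩, h i⟩
    rw [dif_pos]
    swap
    · intro i
      obtain ⟨h1, h2⟩ := Option.eq_some_iff_get_eq.1 (h i)
      rw [h2]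
    simp only [Option.join, eq_mp_eq_cast, cons.injEq, Sigma.mk.inj_iff, heq_eq_eq, rel.injEq,
      true_and]
    refine ⟨funext fun i => ?_, ?_⟩
    · obtain ⟨h1, h2⟩ := Option.eq_some_iff_get_eq.1 (h i)
      rw [cast_eq_iff_heq]
      exact (Sigma.ext_iff.1 ((Sigma.eta (Option.get _ h1)).trans h2)).2
    rw [List.drop_append, length_map, length_finRange, Nat.sub_self, drop,
      drop_eq_nil_of_le, nil_append]
    rw [length_map, length_finRange]
  | imp _ _ ih1 ih2 =>
    intro l
    simp only [] at *
    rw [listEncode, List.append_assoc, cons_append, listDecode]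
    simp only [ih1, ih2, length_cons, le_add_iff_nonneg_left, _root_.zero_le, ↓reduceDIte,
      getElem_cons_zero, getElem_cons_succ, sigmaImp_apply, drop_succ_cons, drop_zero]
  | all _ ih =>
    intro l
    simp only [] at *
    rw [listEncode, cons_append, listDecode]
    simp only [ih, length_cons, le_add_iff_nonneg_left, _root_.zero_le, ↓reduceDIte,
      getElem_cons_zero, sigmaAll_apply, drop_succ_cons, drop_zero]

variable {L : Language} [∀ n, Encodable (L.Functions n)] [∀ n, Encodable (L.Relations n)]

lemma encode_list_map {β : Type*} [Encodable β] (l : List β) :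
    Encodable.encode l = Encodable.encode (l.map Encodable.encode) := by
  induction l with
  | nil => rfl
  | cons a l ih => simp [Encodable.encode_list_cons, ih]

lemma encode_sentence_eq (φ : L.Sentence) :
    Encodable.encode φ =
      Encodable.encode ((BoundedFormula.listEncode φ).map Encodable.encode : List ℕ) := by
  have h1 : Encodable.encode φ
      = Encodable.encode (BoundedFormula.listEncode φ : List (Sym L)) := rfl
  rw [h1, encode_list_map]

/-- Numeric implementation of `imp` on codes of sentences. -/
def impCodeN (t m n : ℕ) : ℕ :=
  Encodable.encode (t :: (Denumerable.ofNat (List ℕ) m ++ Denumerable.ofNat (List ℕ) n))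

lemma listEncode_imp (ψ φ : L.Sentence) :
    BoundedFormula.listEncode (ψ ⟹ φ) =
      impTag L :: (BoundedFormula.listEncode ψ ++ BoundedFormula.listEncode φ) := rfl

lemma impCodeN_encode (ψ φ : L.Sentence) :
    impCodeN (Encodable.encode (impTag L)) (Encodable.encode ψ) (Encodable.encode φ)
      = Encodable.encode (ψ ⟹ φ) := by
  rw [impCodeN, encode_sentence_eq ψ, encode_sentence_eq φ, Denumerable.ofNat_encode,
    Denumerable.ofNat_encode, encode_sentence_eq (ψ ⟹ φ), listEncode_imp]
  simp

lemma ofNat_encode_sentence (ψ : L.Sentence) :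
    Denumerable.ofNat (List ℕ) (Encodable.encode ψ)
      = (BoundedFormula.listEncode ψ).map Encodable.encode := by
  rw [encode_sentence_eq ψ, Denumerable.ofNat_encode]

lemma listDecode_nil {α : Type*} :
    (listDecode ([] : List ((Σ k, L.Term (α ⊕ (Fin k))) ⊕ ((Σ n, L.Relations n) ⊕ ℕ)))) = [] := by
  simpa using listDecode_encode_list ([] : List (Σ n, L.BoundedFormula α n))

lemma impCodeN_sound {U W : L.Theory} {m n : ℕ}
    (hm : m ∈ TheoremSet U) (h : impCodeN (Encodable.encode (impTag L)) m n ∈ TheoremSet W) :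
    ∃ ψ φ : L.Sentence, Encodable.encode ψ = m ∧ Encodable.encode φ = n ∧
      U ⊨ᵇ ψ ∧ W ⊨ᵇ (ψ ⟹ φ) := by
  obtain ⟨ψ, rfl, hψ⟩ := hm
  obtain ⟨χ, hχcode, hχ⟩ := h
  have hlist : (BoundedFormula.listEncode χ).map Encodable.encode
      = Encodable.encode (impTag L) ::
        ((BoundedFormula.listEncode ψ).map Encodable.encode ++ Denumerable.ofNat (List ℕ) n) := by
    apply Encodable.encode_injective (α := List ℕ)
    rw [← encode_sentence_eq χ, hχcode, impCodeN, ofNat_encode_sentence]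
  cases χ with
  | falsum =>
    simp only [show BoundedFormula.listEncode (falsum : L.BoundedFormula Empty 0)
        = [Sum.inr (Sum.inr (0 + 2))] from rfl, List.map_cons, List.map_nil, List.cons.injEq,
      Encodable.encode_inj] at hlist
    simp [impTag] at hlist
  | equal t₁ t₂ =>
    simp only [BoundedFormula.listEncode, List.map_cons, List.cons.injEq,
      Encodable.encode_inj] at hlist
    simp [impTag] at hlist
  | rel R ts =>
    simp only [BoundedFormula.listEncode, List.map_cons, List.cons_append, List.cons.injEq,
      Encodable.encode_inj] at hlist
    simp [impTag] at hlist
  | all φ₀ =>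
    simp only [BoundedFormula.listEncode, List.map_cons, List.cons.injEq,
      Encodable.encode_inj] at hlist
    simp [impTag] at hlist
  | imp φ₁ φ₂ =>
    have htail : (BoundedFormula.listEncode φ₁ ++ BoundedFormula.listEncode φ₂).map
          Encodable.encode
        = (BoundedFormula.listEncode ψ).map Encodable.encode
            ++ Denumerable.ofNat (List ℕ) n := by
      have h2 := hlist
      rw [listEncode_imp φ₁ φ₂] at h2
      simpa using h2
    have htake : (BoundedFormula.listEncode φ₁ ++ BoundedFormula.listEncode φ₂).take
          (BoundedFormula.listEncode ψ).length = BoundedFormula.listEncode ψ := by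
      apply List.map_injective_iff.2 (Encodable.encode_injective (α := Sym L))
      rw [List.map_take, htail]
      exact List.take_left' (by simp)
    have hsplit : BoundedFormula.listEncode φ₁ ++ BoundedFormula.listEncode φ₂
        = BoundedFormula.listEncode ψ ++
          ((BoundedFormula.listEncode φ₁ ++ BoundedFormula.listEncode φ₂).drop
            (BoundedFormula.listEncode ψ).length) := by
      conv_lhs => rw [← List.take_append_drop (BoundedFormula.listEncode ψ).length
        (BoundedFormula.listEncode φ₁ ++ BoundedFormula.listEncode φ₂), htake]
    have hdec := congrArg listDecode hsplit
    rw [listDecode_cons ⟨0, φ₁⟩ (BoundedFormula.listEncode φ₂),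
      listDecode_cons ⟨0, ψ⟩ _] at hdec
    have hψφ₁ : φ₁ = ψ := by
      have h4 := (List.cons.injEq _ _ _ _ ▸ hdec).1
      simpa using h4
    subst hψφ₁
    have hn' : Denumerable.ofNat (List ℕ) n
        = (BoundedFormula.listEncode φ₂).map Encodable.encode := by
      have h3 := htail
      rw [List.map_append] at h3
      exact (List.append_cancel_left h3).symm
    have hn : Encodable.encode φ₂ = n := by
      rw [encode_sentence_eq φ₂, ← hn', Denumerable.encode_ofNat]
    exact ⟨φ₁, φ₂, rfl, hn, hψ, hχ⟩

lemma models_mono {T T' : L.Theory} (h : T ⊆ T') {φ : L.Sentence} (hφ : T ⊨ᵇ φ) :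
    T' ⊨ᵇ φ := by
  rw [Theory.models_sentence_iff]
  intro M
  haveI : (M : Type _) ⊨ T := M.is_model.mono h
  exact hφ.realize_sentence M

lemma realize_sentence_foldr_inf (M : Type*) [L.Structure M] (l : List L.Sentence) :
    M ⊨ (l.foldr (· ⊓ ·) ⊤) ↔ ∀ χ ∈ l, M ⊨ χ :=
  BoundedFormula.realize_foldr_inf l _ _

lemma models_union_iff {U W : L.Theory} {φ : L.Sentence} :
    (U ∪ W) ⊨ᵇ φ ↔ ∃ ψ : L.Sentence, U ⊨ᵇ ψ ∧ W ⊨ᵇ (ψ ⟹ φ) := by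
  classical
  constructor
  · intro h
    obtain ⟨T0, hsub, hT0⟩ := Theory.models_iff_finset_models.1 h
    refine ⟨(T0.filter (· ∈ U)).toList.foldr (· ⊓ ·) ⊤, ?_, ?_⟩
    · rw [Theory.models_sentence_iff]
      intro M
      rw [realize_sentence_foldr_inf]
      intro χ hχ
      rw [Finset.mem_toList, Finset.mem_filter] at hχ
      exact (Theory.models_sentence_of_mem hχ.2).realize_sentence M
    · rw [Theory.models_sentence_iff]
      intro M
      refine BoundedFormula.realize_imp.2 fun hψ => ?_
      have hall : ∀ χ ∈ (T0 : L.Theory), (M : Type _) ⊨ χ := by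
        intro χ hχ
        by_cases hU : χ ∈ U
        · exact (realize_sentence_foldr_inf (M : Type _) _).1 hψ χ
            (by rw [Finset.mem_toList, Finset.mem_filter]; exact ⟨hχ, hU⟩)
        · have : χ ∈ W := (hsub hχ).resolve_left hU
          exact Theory.realize_sentence_of_mem W this
      haveI : (M : Type _) ⊨ (↑T0 : L.Theory) := (Theory.model_iff _).2 hall
      exact hT0.realize_sentence M
  · rintro ⟨ψ, hψ, himp⟩
    rw [Theory.models_sentence_iff]
    intro M
    haveI hU : (M : Type _) ⊨ U := M.is_model.mono Set.subset_union_left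
    haveI hW : (M : Type _) ⊨ W := M.is_model.mono Set.subset_union_right
    exact BoundedFormula.realize_imp.1 (himp.realize_sentence M) (hψ.realize_sentence M)

lemma mem_theoremSet_union_iff {U W : L.Theory} {n : ℕ} :
    n ∈ TheoremSet (U ∪ W) ↔
      ∃ m, m ∈ TheoremSet U ∧
        impCodeN (Encodable.encode (impTag L)) m n ∈ TheoremSet W := by
  constructor
  · rintro ⟨φ, rfl, h⟩
    obtain ⟨ψ, hψ, himp⟩ := models_union_iff.1 h
    exact ⟨Encodable.encode ψ, ⟨ψ, rfl, hψ⟩,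
      by rw [impCodeN_encode]; exact ⟨ψ ⟹ φ, rfl, himp⟩⟩
  · rintro ⟨m, hm, himp⟩
    obtain ⟨ψ, φ, -, rfl, hψ, himp'⟩ := impCodeN_sound hm himp
    exact ⟨φ, rfl, models_union_iff.2 ⟨ψ, hψ, himp'⟩⟩

end Aux

section REAux

open Nat.Partrec (Code)
open Nat.Partrec.Code

set_option maxHeartbeats 1000000 in
lemma re_exists_and {p : ℕ → Prop} {q : ℕ → ℕ → Bool} (hp : REPred p)
    (hq : Computable₂ q) : REPred fun n => ∃ m, p m ∧ q n m = true := by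
  have hf : Partrec fun m => (Part.assert (p m) fun _ => Part.some ()).map fun _ => (0 : ℕ) :=
    hp.map ((Computable.const 0).comp Computable.fst).to₂
  obtain ⟨c, hc⟩ := Nat.Partrec.Code.exists_code.1 (Partrec.nat_iff.1 hf)
  have hpm : ∀ m, p m ↔ ∃ k, (evaln k c m).isSome := by
    intro m
    constructor
    · intro h
      have h0 : (0 : ℕ) ∈ c.eval m := by
        rw [hc]
        simp [Part.mem_map_iff, Part.mem_assert_iff, h]
      obtain ⟨k, hk⟩ := evaln_complete.1 h0
      exact ⟨k, Option.isSome_iff_exists.2 ⟨0, hk⟩⟩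
    · rintro ⟨k, hk⟩
      obtain ⟨x, hx⟩ := Option.isSome_iff_exists.1 hk
      have hx' : x ∈ c.eval m := evaln_complete.2 ⟨k, hx⟩
      rw [hc] at hx'
      simp only [Part.mem_map_iff, Part.mem_assert_iff] at hx'
      obtain ⟨u, ⟨hu, -⟩, -⟩ := hx'
      exact hu
  set D : ℕ → ℕ → Bool := fun n j =>
    cond (evaln j.unpair.1 c j.unpair.2).isSome (q n j.unpair.2) false with hD
  have h1 : Primrec fun j : ℕ => (evaln j.unpair.1 c j.unpair.2).isSome :=
    Primrec.option_isSome.comp <| primrec_evaln.comp <|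
      ((Primrec.fst.comp Primrec.unpair).pair (Primrec.const c)).pair
        (Primrec.snd.comp Primrec.unpair)
  have hDc : Computable₂ D :=
    Computable.cond (h1.to_comp.comp Computable.snd)
      (hq.comp Computable.fst ((Primrec.snd.comp Primrec.unpair).to_comp.comp Computable.snd))
      (Computable.const false)
  have hg : Partrec fun n => Nat.rfind fun j => Part.some (D n j) :=
    Partrec.rfind (hDc.partrec₂)
  have hDtrue : ∀ n j, D n j = true ↔
      ((evaln j.unpair.1 c j.unpair.2).isSome ∧ q n j.unpair.2 = true) := by
    intro n j
    rw [hD]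
    cases h : (evaln j.unpair.1 c j.unpair.2).isSome <;> simp [h]
  refine (hg.dom_re).of_eq fun n => ?_
  refine Iff.trans Nat.rfind_dom ?_
  constructor
  · rintro ⟨j, hj, -⟩
    simp only [Part.mem_some_iff] at hj
    have hj' := (hDtrue n j).1 hj.symm
    exact ⟨j.unpair.2, (hpm _).2 ⟨j.unpair.1, hj'.1⟩, hj'.2⟩
  · rintro ⟨m, hm, hq'⟩
    obtain ⟨k, hk⟩ := (hpm m).1 hm
    refine ⟨Nat.pair k m, ?_, fun {_} _ => trivial⟩
    simp only [Part.mem_some_iff]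
    exact ((hDtrue n _).2 (by simp [Nat.unpair_pair, hk, hq'])).symm

variable {L : Language} [∀ n, Encodable (L.Functions n)] [∀ n, Encodable (L.Relations n)]

lemma isRE_union {U W : L.Theory} (hU : IsRE U) (hW : IsDecidableTheory W) :
    IsRE (U ∪ W) := by
  obtain ⟨f, hf, hfeq⟩ := ComputablePred.computable_iff.1 hW
  have hfmem : ∀ a, a ∈ TheoremSet W ↔ f a = true := fun a => by
    have := congrFun hfeq a
    simp only [eq_iff_iff] at this
    exact this
  set t : ℕ := Encodable.encode (impTag L) with ht
  have h1 : Primrec fun p : ℕ × ℕ => impCodeN t p.2 p.1 :=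
    Primrec.encode.comp (Primrec.list_cons.comp (Primrec.const t)
      (Primrec.list_append.comp ((Primrec.ofNat (List ℕ)).comp Primrec.snd)
        ((Primrec.ofNat (List ℕ)).comp Primrec.fst)))
  have hq : Computable₂ fun n m : ℕ => f (impCodeN t m n) :=
    (hf.comp h1.to_comp).to₂
  refine (re_exists_and hU hq).of_eq fun n => ?_
  rw [mem_theoremSet_union_iff (U := U) (W := W) (n := n)]
  constructor
  · rintro ⟨m, hm, hcode⟩
    exact ⟨m, hm, (hfmem _).2 hcode⟩
  · rintro ⟨m, hm, hcode⟩
    exact ⟨m, hm, (hfmem _).1 hcode⟩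

end REAux

end Formalization

namespace Formalization

/-- A consistent r.e. theory `U` is essentially hereditarily undecidable iff
for every set `W` of sentences in the language of `U` such that `U ∪ W` is consistent,
the theory axiomatized by `W` is undecidable. -/
theorem statement_0 {L : Language} [∀ n, Encodable (L.Functions n)]
    [∀ n, Encodable (L.Relations n)] (U : L.Theory) (_hre : IsRE U) (_hcon : Consistent U) :
    EssHeredUndecidable U ↔
      ∀ W : L.Theory, Consistent (U ∪ W) → ¬ IsDecidableTheory W := by
  constructor
  · intro h W hWcon hWdec
    have hWre : IsRE W := hWdec.to_re
    have hVre : IsRE (U ∪ W) := isRE_union _hre hWdec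
    have hUV : Extends U (U ∪ W) := fun φ => models_mono Set.subset_union_left
    have hWV : Extends W (U ∪ W) := fun φ => models_mono Set.subset_union_right
    have hWcons : Consistent W := fun hb => hWcon (hWV _ hb)
    exact h (U ∪ W) hVre hWcon hUV W hWre hWcons hWV hWdec
  · intro h V hVre hVcon hVext W' hW're hW'con hW'ext hW'dec
    refine h W' ?_ hW'dec
    intro hbot
    apply hVcon
    rw [Theory.models_sentence_iff]
    intro M
    haveI : (M : Type _) ⊨ U ∪ W' := (Theory.model_iff _).2 (by
      intro χ hχ
      rcases hχ with hχ | hχ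
      · exact (hVext χ (Theory.models_sentence_of_mem hχ)).realize_sentence M
      · exact (hW'ext χ (Theory.models_sentence_of_mem hχ)).realize_sentence M)
    exact hbot.realize_sentence M


end Formalization
end

section
/- Suppose Φ is a computable function from the natural numbers to the sentences of a consistent RE theory U, and X, Y is a pair of recursively inseparable sets of natural numbers. Suppose Φ maps every element of X to a theorem of U and every element of Y to a sentence refuted by U. Then U is essentially undecidable. -/
open FirstOrder Language

namespace Formalization

/-- Disjoint sets `X`, `Y` of naturals are recursively inseparable if there is no
computable set containing `X` and disjoint from `Y`. -/
def RecInseparable (X Y : Set ℕ) : Prop :=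
  ¬ ∃ C : Set ℕ, ComputablePred (· ∈ C) ∧ X ⊆ C ∧ ∀ y ∈ Y, y ∉ C

/-- if a computable `Φ` maps a pair of recursively inseparable sets into
the theorems, respectively the refutable sentences, of a consistent r.e. theory `U`,
then `U` is essentially undecidable. -/
theorem statement_8 {L : Language} [∀ n, Encodable (L.Functions n)]
    [∀ n, Encodable (L.Relations n)] (U : L.Theory) (hre : IsRE U) (hcon : Consistent U)
    (Φ : ℕ → L.Sentence)
    (hΦ : ∃ f : ℕ → ℕ, Computable f ∧ ∀ n, f n = Encodable.encode (Φ n))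
    (X Y : Set ℕ) (hdisj : Disjoint X Y) (hinsep : RecInseparable X Y)
    (hX : ∀ n ∈ X, U ⊨ᵇ Φ n) (hY : ∀ n ∈ Y, U ⊨ᵇ ∼(Φ n)) :
    EssUndecidable U := by
  intro W hWre hWcon hext hWdec
  obtain ⟨f, hf, hfe⟩ := hΦ
  apply hinsep
  refine ⟨{n | f n ∈ TheoremSet W}, ?_, ?_, ?_⟩
  · obtain ⟨g, hg, hgp⟩ := ComputablePred.computable_iff.1 hWdec
    exact ComputablePred.computable_iff.2 ⟨fun n => g (f n), hg.comp hf,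
      by funext n; exact congrFun hgp (f n)⟩
  · intro n hn
    exact ⟨Φ n, (hfe n).symm, hext _ (hX n hn)⟩
  · rintro y hy ⟨φ, hφe, hφ⟩
    have hφ' : φ = Φ y := Encodable.encode_injective (by rw [hφe, hfe])
    subst hφ'
    have h2 := hext _ (hY y hy)
    apply hWcon
    intro M v xs
    exact absurd (hφ M v xs) (h2 M v xs)

end Formalization
end

section
/- Suppose Z ⊆ ℕ is an RE set such that for every m there is an n with ⟨n,m⟩ ∈ Z. Then the sets Km₀ ∩ Z and Km₁ ∩ Z are effectively inseparable. -/
namespace Formalization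

open Nat.Partrec (Code)
open Nat.Partrec.Code

/-- Kleene application: apply the partial recursive function with code `x` to `y`. -/
def kleene (x y : ℕ) : Part ℕ :=
  (Denumerable.ofNat Nat.Partrec.Code x).eval y

/-- `Km i` is the set of pairs `⟨n, x⟩` such that `x · ⟨n, x⟩` converges with value
`i`. -/
def Km (i : ℕ) : Set ℕ :=
  {p | i ∈ kleene (Nat.unpair p).2 p}

/-- `WSet i` is the r.e. subset of `ℕ` with index `i` (the domain of the partial
recursive function with code `i`). -/
def WSet (i : ℕ) : Set ℕ :=
  {n | ((Denumerable.ofNat Nat.Partrec.Code i).eval n).Dom}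

/-- Disjoint sets `A`, `B` are effectively inseparable if there is a partial recursive
`Ψ` such that whenever `A ⊆ W_i`, `B ⊆ W_j` and `W_i ∩ W_j = ∅`, then `Ψ⟨i,j⟩`
converges to a value outside `W_i ∪ W_j`. -/
def EffInseparable (A B : Set ℕ) : Prop :=
  ∃ Ψ : ℕ →. ℕ, Partrec Ψ ∧
    ∀ i j : ℕ, A ⊆ WSet i → B ⊆ WSet j → WSet i ∩ WSet j = ∅ →
      ∃ h : (Ψ (Nat.pair i j)).Dom, (Ψ (Nat.pair i j)).get h ∉ WSet i ∪ WSet j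

/-- `bb k c p` : the machine with index `c` halts on `p` within `k` steps. -/
def bb (k c p : ℕ) : Bool := (evaln k (Denumerable.ofNat Code c) p).isSome

lemma bb_iff {c p : ℕ} : (∃ k, bb k c p) ↔ p ∈ WSet c := by
  constructor
  · rintro ⟨k, hk⟩
    obtain ⟨x, hx⟩ := Option.isSome_iff_exists.1 hk
    exact Part.dom_iff_mem.2 ⟨x, evaln_sound hx⟩
  · intro h
    obtain ⟨x, hx⟩ := Part.dom_iff_mem.1 h
    obtain ⟨k, hk⟩ := evaln_complete.1 hx
    exact ⟨k, Option.isSome_iff_exists.2 ⟨x, hk⟩⟩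

lemma bb_code_iff {c : Code} {p : ℕ} :
    (∃ k, bb k (Encodable.encode c) p) ↔ (eval c p).Dom := by
  rw [bb_iff]; simp [WSet, Denumerable.ofNat_encode]

/-- Dovetailing function: on input `x = ⟨⟨i,j⟩,p⟩`, search for a stage where machine
`i` or machine `j` halts on `p`; output `0` if `j` has halted at that stage, else `1`. -/
def dove (x : ℕ) : Part ℕ :=
  (Nat.rfind fun t => Part.some
      (bb t x.unpair.1.unpair.2 x.unpair.2 || bb t x.unpair.1.unpair.1 x.unpair.2)).map
    fun t => cond (bb t x.unpair.1.unpair.2 x.unpair.2) 0 1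

lemma bb_prim : Primrec fun q : (ℕ × ℕ) × ℕ => bb q.1.2 q.1.1 q.2 :=
  Primrec.option_isSome.comp <| primrec_evaln.comp <|
    ((Primrec.snd.comp Primrec.fst).pair
      ((Primrec.ofNat Code).comp (Primrec.fst.comp Primrec.fst))).pair Primrec.snd

lemma dove_partrec : Partrec dove := by
  have hJ : Primrec fun q : ℕ × ℕ => bb q.2 q.1.unpair.1.unpair.2 q.1.unpair.2 :=
    bb_prim.comp <| ((Primrec.snd.comp <| Primrec.unpair.comp <|
      Primrec.fst.comp <| Primrec.unpair.comp Primrec.fst).pair Primrec.snd).pair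
      (Primrec.snd.comp <| Primrec.unpair.comp Primrec.fst)
  have hI : Primrec fun q : ℕ × ℕ => bb q.2 q.1.unpair.1.unpair.1 q.1.unpair.2 :=
    bb_prim.comp <| ((Primrec.fst.comp <| Primrec.unpair.comp <|
      Primrec.fst.comp <| Primrec.unpair.comp Primrec.fst).pair Primrec.snd).pair
      (Primrec.snd.comp <| Primrec.unpair.comp Primrec.fst)
  have hor : Primrec fun q : ℕ × ℕ =>
      (bb q.2 q.1.unpair.1.unpair.2 q.1.unpair.2 || bb q.2 q.1.unpair.1.unpair.1 q.1.unpair.2) := by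
    have := Primrec.cond hJ (Primrec.const true) hI
    refine this.of_eq fun q => ?_
    cases bb q.2 q.1.unpair.1.unpair.2 q.1.unpair.2 <;> simp
  have hrf : Partrec fun x : ℕ => Nat.rfind fun t => Part.some
      (bb t x.unpair.1.unpair.2 x.unpair.2 || bb t x.unpair.1.unpair.1 x.unpair.2) :=
    Partrec.rfind hor.to_comp.partrec.to₂
  have hout : Computable₂ fun (x t : ℕ) =>
      cond (bb t x.unpair.1.unpair.2 x.unpair.2) (0 : ℕ) 1 :=
    (Primrec.cond hJ (Primrec.const 0) (Primrec.const 1)).to_comp.to₂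
  exact hrf.map hout

/-- if `Z` is an r.e. set such that for every `m` there is an `n` with
`⟨n, m⟩ ∈ Z`, then `Km₀ ∩ Z` and `Km₁ ∩ Z` are effectively inseparable. -/
theorem statement_18 (Z : Set ℕ) (hre : REPred (· ∈ Z))
    (hZ : ∀ m : ℕ, ∃ n : ℕ, Nat.pair n m ∈ Z) :
    EffInseparable (Km 0 ∩ Z) (Km 1 ∩ Z) := by
  classical
  -- a code `cz` whose domain is `Z`
  have hz' : Partrec fun n : ℕ => (Part.assert (n ∈ Z) fun _ => Part.some ()).map fun _ => 0 :=
    Partrec.map hre (((Computable.const 0).comp Computable.fst).to₂)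
  obtain ⟨cz, hcz⟩ := exists_code.1 (Partrec.nat_iff.1 hz')
  have hczDom : ∀ n, (eval cz n).Dom ↔ n ∈ Z := by
    intro n; rw [hcz]; simp [Part.assert]
  -- a code `c` for `dove`
  obtain ⟨c, hc⟩ := exists_code.1 (Partrec.nat_iff.1 dove_partrec)
  -- the index of the curried code
  set E : ℕ → ℕ := fun m => Encodable.encode (curry c m) with hE
  have hEval : ∀ m p : ℕ, kleene (E m) p = dove (Nat.pair m p) := by
    intro m p
    simp only [kleene, hE, Denumerable.ofNat_encode, eval_curry, hc]
  have hEprim : Primrec E := Primrec.encode.comp (primrec₂_curry.comp (Primrec.const c) Primrec.id)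
  -- the separating function
  refine ⟨fun m => (Nat.rfind fun s => Part.some (bb s.unpair.1 (Encodable.encode cz)
      (Nat.pair s.unpair.2 (E m)))).map fun s => Nat.pair s.unpair.2 (E m), ?_, ?_⟩
  · have hb : Primrec fun q : ℕ × ℕ =>
        bb q.2.unpair.1 (Encodable.encode cz) (Nat.pair q.2.unpair.2 (E q.1)) :=
      bb_prim.comp <| ((Primrec.const (Encodable.encode cz)).pair
        (Primrec.fst.comp <| Primrec.unpair.comp Primrec.snd)).pair
        (Primrec₂.natPair.comp (Primrec.snd.comp <| Primrec.unpair.comp Primrec.snd)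
          (hEprim.comp Primrec.fst))
    exact (Partrec.rfind hb.to_comp.partrec.to₂).map ((Primrec₂.natPair.comp
      (Primrec.snd.comp <| Primrec.unpair.comp Primrec.snd)
      (hEprim.comp Primrec.fst)).to_comp.to₂)
  · intro i j hA hB hdisj
    have hdisj' : ∀ x, x ∈ WSet i → x ∈ WSet j → False := fun x h1 h2 =>
      Set.eq_empty_iff_forall_notMem.1 hdisj x ⟨h1, h2⟩
    -- domain: there is some `n` with `⟨n, e⟩ ∈ Z`, where `e := E (Nat.pair i j)`
    obtain ⟨n, hn⟩ := hZ (E (Nat.pair i j))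
    obtain ⟨k, hk⟩ : ∃ k, bb k (Encodable.encode cz) (Nat.pair n (E (Nat.pair i j))) :=
      bb_code_iff.2 ((hczDom _).2 hn)
    have hrdom : (Nat.rfind fun s => Part.some (bb s.unpair.1 (Encodable.encode cz)
        (Nat.pair s.unpair.2 (E (Nat.pair i j))))).Dom := by
      refine Nat.rfind_dom.2 ⟨Nat.pair k n, ?_, fun _ => trivial⟩
      simp [hk]
    refine ⟨hrdom, ?_⟩
    set s : ℕ := (Nat.rfind fun s => Part.some (bb s.unpair.1 (Encodable.encode cz)
        (Nat.pair s.unpair.2 (E (Nat.pair i j))))).get hrdom with hs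
    have hsmem := Part.get_mem hrdom
    rw [← hs] at hsmem
    have hspec : bb s.unpair.1 (Encodable.encode cz)
        (Nat.pair s.unpair.2 (E (Nat.pair i j))) = true := by
      simpa using Nat.rfind_spec hsmem
    set p : ℕ := Nat.pair s.unpair.2 (E (Nat.pair i j)) with hp
    have hpZ : p ∈ Z := (hczDom _).1 (bb_code_iff.1 ⟨_, hspec⟩)
    -- main argument
    intro hmem
    have hmem' : p ∈ WSet i ∪ WSet j := hmem
    have hdove : ∃ t, (bb t j p || bb t i p) = true := by
      rcases hmem' with h | h
      · obtain ⟨t, ht⟩ := bb_iff.2 h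
        exact ⟨t, by simp [ht]⟩
      · obtain ⟨t, ht⟩ := bb_iff.2 h
        exact ⟨t, by simp [ht]⟩
    have hddom : (Nat.rfind fun t => Part.some
        (bb t (Nat.pair (Nat.pair i j) p).unpair.1.unpair.2 (Nat.pair (Nat.pair i j) p).unpair.2 ||
         bb t (Nat.pair (Nat.pair i j) p).unpair.1.unpair.1
           (Nat.pair (Nat.pair i j) p).unpair.2)).Dom := by
      obtain ⟨t, ht⟩ := hdove
      refine Nat.rfind_dom.2 ⟨t, ?_, fun _ => trivial⟩
      simp only [Nat.unpair_pair]
      simpa using ht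
    set t : ℕ := (Nat.rfind fun t => Part.some
        (bb t (Nat.pair (Nat.pair i j) p).unpair.1.unpair.2 (Nat.pair (Nat.pair i j) p).unpair.2 ||
         bb t (Nat.pair (Nat.pair i j) p).unpair.1.unpair.1
           (Nat.pair (Nat.pair i j) p).unpair.2)).get hddom with hts
    have htmem := Part.get_mem hddom
    rw [← hts] at htmem
    have htspec : (bb t j p || bb t i p) = true := by
      have := Nat.rfind_spec htmem
      simpa [Nat.unpair_pair] using this
    have hvmem : (cond (bb t (Nat.pair (Nat.pair i j) p).unpair.1.unpair.2
        (Nat.pair (Nat.pair i j) p).unpair.2) 0 1) ∈ dove (Nat.pair (Nat.pair i j) p) :=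
      Part.mem_map _ htmem
    have hvmem' : (cond (bb t j p) 0 1) ∈ dove (Nat.pair (Nat.pair i j) p) := by
      simpa [Nat.unpair_pair] using hvmem
    have hkle : kleene (Nat.unpair p).2 p = dove (Nat.pair (Nat.pair i j) p) := by
      rw [hp, Nat.unpair_pair]
      exact hEval (Nat.pair i j) p
    rcases hbj : bb t j p with _ | _
    · -- j did not halt by stage t, so i did: value is 1
      rw [hbj] at htspec hvmem'
      simp only [Bool.false_or] at htspec
      have hpWi : p ∈ WSet i := bb_iff.1 ⟨t, htspec⟩
      have hpKm : p ∈ Km 1 := by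
        show 1 ∈ kleene (Nat.unpair p).2 p
        rw [hkle]
        simpa using hvmem'
      exact hdisj' p hpWi (hB ⟨hpKm, hpZ⟩)
    · -- j halted by stage t: value is 0
      rw [hbj] at hvmem'
      have hpWj : p ∈ WSet j := bb_iff.1 ⟨t, hbj⟩
      have hpKm : p ∈ Km 0 := by
        show 0 ∈ kleene (Nat.unpair p).2 p
        rw [hkle]
        simpa using hvmem'
      exact hdisj' p (hA ⟨hpKm, hpZ⟩) hpWj

end Formalization
end
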